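/- Let X be a real normed space and Y a real Hilbert space. Let A : X → Y be a bounded linear map, B : X × X → Y a bounded symmetric bilinear map, and K(u) := A(u) + B(u, u). Let R : X → ℝ ∪ {+∞}, let δ ≥ 0, α > 0, and g†, g^δ ∈ Y with ‖g† − g^δ‖ ≤ δ. Let u† ∈ X satisfy K(u†) = g† and R(u†) < +∞, and assume the source condition: there exists ω ∈ Y such that R(v) ≥ R(u†) + ⟨ω, A(v − u†)⟩ + ⟨ω, B(v, v) − B(u†, u†)⟩ for all v ∈ X. Let u_α ∈ X be a minimizer of J_α(u) := ‖K(u) − g^δ‖² + α R(u), i.e. J_α(u_α) ≤ J_α(u) for all u ∈ X. Then R(u_α) < +∞, the dilinear Bregman distance Δ := R(u_α) − R(u†) − ⟨ω, A(u_α − u†)⟩ − ⟨ω, B(u_α, u_α) − B(u†, u†)⟩ satisfies Δ ≤ (δ/√α + (√α/2) ‖ω‖)², and the data fidelity satisfies ‖K(u_α) − g^δ‖ ≤ δ + α ‖ω‖. (Convergence rate under a source-wise representation.) -/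

import Mathlib

set_option maxHeartbeats 800000 in
/-- **Convergence rate under a source-wise representation.**
Let `K u = A u + B u u` be a bounded dilinear map from a real normed space `X` into a
real Hilbert space `Y`, `R : X → ℝ ∪ {+∞}`, `‖g† − g^δ‖ ≤ δ`, `K u† = g†` with
`R u†` finite, and assume the source condition
`R v ≥ R u† + ⟨ω, A (v − u†)⟩ + ⟨ω, B v v − B u† u†⟩` for some `ω ∈ Y`.  If `u_α`
minimizes `J_α u = ‖K u − g^δ‖² + α R u`, then `R u_α < ∞`, the dilinear Bregman
distance satisfies `Δ ≤ (δ/√α + (√α/2)‖ω‖)²`, and `‖K u_α − g^δ‖ ≤ δ + α ‖ω‖`. -/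
theorem dilinear_convergence_rate
    {X Y : Type*} [NormedAddCommGroup X] [NormedSpace ℝ X]
    [NormedAddCommGroup Y] [InnerProductSpace ℝ Y] [CompleteSpace Y]
    (A : X →L[ℝ] Y) (B : X →L[ℝ] X →L[ℝ] Y) (hBsymm : ∀ a b : X, B a b = B b a)
    (R : X → EReal) (hRbot : ∀ u : X, R u ≠ ⊥)
    (δ : ℝ) (hδ : 0 ≤ δ) (α : ℝ) (hα : 0 < α)
    (gdag gδ : Y) (hnoise : ‖gdag - gδ‖ ≤ δ)
    (udag : X) (hsol : A udag + B udag udag = gdag) (hRfin : R udag ≠ ⊤)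
    (ω : Y)
    (hsource : ∀ v : X,
      R udag + (((inner ℝ ω (A (v - udag)) : ℝ) +
        (inner ℝ ω (B v v - B udag udag) : ℝ) : ℝ) : EReal) ≤ R v)
    (uα : X)
    (hmin : ∀ u : X,
      ((‖A uα + B uα uα - gδ‖ ^ 2 : ℝ) : EReal) + (α : EReal) * R uα ≤
      ((‖A u + B u u - gδ‖ ^ 2 : ℝ) : EReal) + (α : EReal) * R u) :
    R uα ≠ ⊤ ∧
    R uα - R udag - (((inner ℝ ω (A (uα - udag)) : ℝ) +
        (inner ℝ ω (B uα uα - B udag udag) : ℝ) : ℝ) : EReal) ≤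
      (((δ / Real.sqrt α + Real.sqrt α / 2 * ‖ω‖) ^ 2 : ℝ) : EReal) ∧
    ‖A uα + B uα uα - gδ‖ ≤ δ + α * ‖ω‖ := by

  have hmin1 := hmin udag
  rw [hsol] at hmin1
  obtain ⟨b, hb⟩ : ∃ b : ℝ, R udag = (b : EReal) :=
    ⟨(R udag).toReal, (EReal.coe_toReal hRfin (hRbot udag)).symm⟩
  have hRtop : R uα ≠ ⊤ := by
    intro h
    rw [h, hb] at hmin1
    have h1 : (α : EReal) * (⊤ : EReal) = ⊤ := by
      rw [EReal.mul_top_of_pos]; exact_mod_cast hα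
    rw [h1, EReal.add_top_of_ne_bot (EReal.coe_ne_bot _)] at hmin1
    have := top_le_iff.mp hmin1
    have h2 : ((‖gdag - gδ‖ ^ 2 : ℝ) : EReal) + ((α * b : ℝ) : EReal) = ⊤ := by
      rw [← this]; norm_cast
    exact (EReal.coe_ne_top _) (by exact_mod_cast h2)
  obtain ⟨a, ha⟩ : ∃ a : ℝ, R uα = (a : EReal) :=
    ⟨(R uα).toReal, (EReal.coe_toReal hRtop (hRbot uα)).symm⟩
  set s : ℝ := (inner ℝ ω (A (uα - udag)) : ℝ) + (inner ℝ ω (B uα uα - B udag udag) : ℝ) with hsdef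
  have hm : ‖A uα + B uα uα - gδ‖ ^ 2 + α * a ≤ ‖gdag - gδ‖ ^ 2 + α * b := by
    rw [ha, hb] at hmin1; exact_mod_cast hmin1
  have hsrc : b + s ≤ a := by
    have := hsource uα
    rw [ha, hb] at this; exact_mod_cast this
  have hs : s = (inner ℝ ω (A uα + B uα uα - gdag) : ℝ) := by
    rw [hsdef, ← hsol, map_sub]
    rw [show A uα + B uα uα - (A udag + B udag udag)
        = (A uα - A udag) + (B uα uα - B udag udag) by abel]
    rw [inner_add_right]
  set r : ℝ := ‖A uα + B uα uα - gδ‖ with hrdef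
  set w : ℝ := ‖ω‖ with hwdef
  have hr0 : 0 ≤ r := norm_nonneg _
  have hw0 : 0 ≤ w := norm_nonneg _
  have hstri : ‖A uα + B uα uα - gdag‖ ≤ r + δ := by
    calc ‖A uα + B uα uα - gdag‖ = ‖(A uα + B uα uα - gδ) + (gδ - gdag)‖ := by
          congr 1; abel
      _ ≤ r + ‖gδ - gdag‖ := norm_add_le _ _
      _ ≤ r + δ := by rw [norm_sub_rev]; linarith
  have hsabs : |s| ≤ w * (r + δ) := by
    rw [hs]
    calc |(inner ℝ ω (A uα + B uα uα - gdag) : ℝ)| ≤ w * ‖A uα + B uα uα - gdag‖ :=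
          abs_real_inner_le_norm _ _
      _ ≤ w * (r + δ) := by
          apply mul_le_mul_of_nonneg_left hstri hw0
  have he2 : ‖gdag - gδ‖ ^ 2 ≤ δ ^ 2 := by
    have := norm_nonneg (gdag - gδ)
    nlinarith
  -- third conclusion
  have hthird : r ≤ δ + α * w := by
    have hkey : r ^ 2 ≤ δ ^ 2 + α * w * (r + δ) := by
      have h1 : -s ≤ w * (r + δ) := by
        have := abs_le.mp hsabs; linarith
      nlinarith [mul_le_mul_of_nonneg_left h1 hα.le]
    by_contra hcon
    push_neg at hcon
    have hrpos : 0 < r + δ := by nlinarith [mul_nonneg hα.le hw0]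
    nlinarith [mul_pos (by nlinarith [mul_nonneg hα.le hw0] : (0:ℝ) < r - δ - α * w) hrpos]
  refine ⟨hRtop, ?_, hthird⟩
  rw [ha, hb]
  have hgoal : a - b - s ≤ (δ / Real.sqrt α + Real.sqrt α / 2 * w) ^ 2 := by
    set t : ℝ := Real.sqrt α with htdef
    have ht0 : 0 < t := Real.sqrt_pos.mpr hα
    have ht2 : t ^ 2 = α := Real.sq_sqrt hα.le
    have hrhs : α * (δ / t + t / 2 * w) ^ 2 = δ ^ 2 + α * δ * w + α ^ 2 * w ^ 2 / 4 := by
      rw [← ht2]; field_simp; ring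
    have h1 : -s ≤ w * (r + δ) := by
      have := abs_le.mp hsabs; linarith
    have h2 : α * (a - b - s) ≤ δ ^ 2 + α * δ * w + α ^ 2 * w ^ 2 / 4 := by
      nlinarith [mul_le_mul_of_nonneg_left h1 hα.le, sq_nonneg (r - α * w / 2)]
    nlinarith [h2, hrhs]
  exact_mod_cast hgoal
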